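/- For every even integer n ≥ 4, the edge-locating chromatic number of the complete graph K_n equals n + 1. -/

import Mathlib

open SimpleGraph

/-- Distance from a vertex to an edge: the minimum of the distances to the two endpoints. -/
noncomputable def edgeDist {V : Type*} (G : SimpleGraph V) (v : V) (e : Sym2 V) : ℕ :=
  Sym2.lift ⟨fun x y => min (G.dist v x) (G.dist v y), fun _ _ => min_comm _ _⟩ e

/-- Distance (in `ℕ∞`) from a vertex to the `i`-th color class of an edge coloring `c`
(it is `⊤` if the class is empty). -/
noncomputable def classDist {V : Type*} (G : SimpleGraph V) {k : ℕ} (c : Sym2 V → Fin k)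
    (v : V) (i : Fin k) : ℕ∞ :=
  ⨅ e ∈ {e | e ∈ G.edgeSet ∧ c e = i}, (edgeDist G v e : ℕ∞)

/-- `c` is an edge-locating `k`-coloring of `G`: it is a proper edge coloring (distinct edges
sharing an endpoint get different colors), and distinct vertices have distinct edge color codes
`(d(v, C_1), …, d(v, C_k))`. -/
def IsEdgeLocatingColoring {V : Type*} (G : SimpleGraph V) {k : ℕ} (c : Sym2 V → Fin k) : Prop :=
  (∀ e ∈ G.edgeSet, ∀ f ∈ G.edgeSet, e ≠ f → (∃ x, x ∈ e ∧ x ∈ f) → c e ≠ c f) ∧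
  (∀ u v : V, u ≠ v → ∃ i, classDist G c u i ≠ classDist G c v i)

/-- The edge-locating chromatic number `χ'_L(G)`: the least `k` such that `G` admits an
edge-locating `k`-coloring. -/
noncomputable def edgeLocatingChromaticNumber {V : Type*} (G : SimpleGraph V) : ℕ :=
  sInf {k | ∃ c : Sym2 V → Fin k, IsEdgeLocatingColoring G c}

/-- The join `G + H` of two graphs: all edges of `G`, all edges of `H`, and all edges between
a vertex of `G` and a vertex of `H`. -/
def graphJoin {α β : Type*} (G : SimpleGraph α) (H : SimpleGraph β) : SimpleGraph (α ⊕ β) :=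
  SimpleGraph.fromRel (fun x y =>
    (∃ a b, x = Sum.inl a ∧ y = Sum.inl b ∧ G.Adj a b) ∨
    (∃ a b, x = Sum.inr a ∧ y = Sum.inr b ∧ H.Adj a b) ∨
    (∃ a b, x = Sum.inl a ∧ y = Sum.inr b))

/-- A set `M` of edges of `G` forming a matching: pairwise vertex-disjoint edges of `G`. -/
def IsMatchingSet {V : Type*} (G : SimpleGraph V) (M : Set (Sym2 V)) : Prop :=
  M ⊆ G.edgeSet ∧ ∀ e ∈ M, ∀ f ∈ M, e ≠ f → ∀ x, x ∈ e → x ∉ f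

/-! ### Auxiliary lemmas -/

lemma EL.top_dist_one {n : ℕ} {x y : Fin n} (h : x ≠ y) :
    (⊤ : SimpleGraph (Fin n)).dist x y = 1 :=
  SimpleGraph.dist_eq_one_iff_adj.2 h

lemma EL.classDist_eq_zero_of {n k : ℕ} (c : Sym2 (Fin n) → Fin k) {v w : Fin n} (hvw : w ≠ v)
    {i : Fin k} (h : c s(v,w) = i) : classDist (⊤ : SimpleGraph (Fin n)) c v i = 0 := by
  refine le_antisymm ?_ zero_le
  have hmem : s(v,w) ∈ {e | e ∈ (⊤ : SimpleGraph (Fin n)).edgeSet ∧ c e = i} :=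
    ⟨by simp [SimpleGraph.mem_edgeSet, hvw.symm], h⟩
  calc classDist ⊤ c v i ≤ (edgeDist ⊤ v s(v,w) : ℕ∞) := iInf₂_le _ hmem
    _ = 0 := by simp [edgeDist, SimpleGraph.dist_self]

lemma EL.edgeDist_eq_one {n : ℕ} {v x y : Fin n} (hxy : x ≠ y) (hvx : v ≠ x) (hvy : v ≠ y) :
    edgeDist (⊤ : SimpleGraph (Fin n)) v s(x,y) = 1 := by
  simp [edgeDist, EL.top_dist_one hvx, EL.top_dist_one hvy]

lemma EL.not_mem_of_forall {n k : ℕ} {c : Sym2 (Fin n) → Fin k} {v : Fin n} {i : Fin k}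
    (h : ∀ w, w ≠ v → c s(v,w) ≠ i) {e : Sym2 (Fin n)}
    (he : e ∈ {e | e ∈ (⊤ : SimpleGraph (Fin n)).edgeSet ∧ c e = i}) : v ∉ e := by
  intro hv
  obtain ⟨w, rfl⟩ := Sym2.mem_iff_exists.1 hv
  have he1 : s(v,w) ∈ (⊤ : SimpleGraph (Fin n)).edgeSet := he.1
  rw [SimpleGraph.mem_edgeSet] at he1
  exact h w (he1.ne).symm he.2

lemma EL.one_le_classDist {n k : ℕ} (c : Sym2 (Fin n) → Fin k) {v : Fin n} {i : Fin k}
    (h : ∀ w, w ≠ v → c s(v,w) ≠ i) :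
    1 ≤ classDist (⊤ : SimpleGraph (Fin n)) c v i := by
  unfold classDist
  refine le_iInf fun e => le_iInf fun he => ?_
  have hv : v ∉ e := EL.not_mem_of_forall h he
  induction e with
  | _ x y =>
    have he1 : s(x,y) ∈ (⊤ : SimpleGraph (Fin n)).edgeSet := he.1
    rw [SimpleGraph.mem_edgeSet] at he1
    simp only [Sym2.mem_iff] at hv
    push_neg at hv
    rw [EL.edgeDist_eq_one he1.ne hv.1 hv.2]
    exact le_refl _

lemma EL.classDist_ne_zero {n k : ℕ} (c : Sym2 (Fin n) → Fin k) {v : Fin n} {i : Fin k}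
    (h : ∀ w, w ≠ v → c s(v,w) ≠ i) :
    classDist (⊤ : SimpleGraph (Fin n)) c v i ≠ 0 := by
  intro h0
  have := EL.one_le_classDist c h
  rw [h0] at this
  simpa using this

lemma EL.classDist_congr {n k : ℕ} (c : Sym2 (Fin n) → Fin k) {u v : Fin n} {i : Fin k}
    (hu : ∀ w, w ≠ u → c s(u,w) ≠ i) (hv : ∀ w, w ≠ v → c s(v,w) ≠ i) :
    classDist (⊤ : SimpleGraph (Fin n)) c u i = classDist (⊤ : SimpleGraph (Fin n)) c v i := by
  unfold classDist
  refine iInf_congr fun e => iInf_congr fun he => ?_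
  have hue : u ∉ e := EL.not_mem_of_forall hu he
  have hve : v ∉ e := EL.not_mem_of_forall hv he
  induction e with
  | _ x y =>
    have he1 : s(x,y) ∈ (⊤ : SimpleGraph (Fin n)).edgeSet := he.1
    rw [SimpleGraph.mem_edgeSet] at he1
    simp only [Sym2.mem_iff] at hue hve
    push_neg at hue hve
    rw [EL.edgeDist_eq_one he1.ne hue.1 hue.2, EL.edgeDist_eq_one he1.ne hve.1 hve.2]

/-! ### Lower bound -/

lemma EL.lower {n : ℕ} (hn : 4 ≤ n) (heven : Even n) {k : ℕ} (c : Sym2 (Fin n) → Fin k)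
    (hc : IsEdgeLocatingColoring (⊤ : SimpleGraph (Fin n)) c) : n + 1 ≤ k := by
  obtain ⟨hprop, hloc⟩ := hc
  by_contra hlt
  push_neg at hlt
  have hkn : k ≤ n := by omega
  classical
  set incF : Fin n → Finset (Fin k) :=
    fun v => (Finset.univ.erase v).image (fun w => c s(v,w)) with hincF
  have hmemInc : ∀ (v : Fin n) (i : Fin k), i ∈ incF v ↔ ∃ w, w ≠ v ∧ c s(v,w) = i := by
    intro v i
    simp [hincF, Finset.mem_image, Finset.mem_erase]
  have hpropv : ∀ (v w w' : Fin n), w ≠ v → w' ≠ v → c s(v,w) = c s(v,w') → w = w' := by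
    intro v w w' hw hw' hcc
    by_contra hne
    have hse : s(v,w) ≠ s(v,w') := fun h => hne (Sym2.congr_right.mp h)
    exact hprop _ (by simp [SimpleGraph.mem_edgeSet, hw.symm]) _
      (by simp [SimpleGraph.mem_edgeSet, hw'.symm]) hse ⟨v, by simp, by simp⟩ hcc
  have hcard : ∀ v : Fin n, (incF v).card = n - 1 := by
    intro v
    rw [hincF]
    rw [Finset.card_image_of_injOn ?_]
    · rw [Finset.card_erase_of_mem (Finset.mem_univ v), Finset.card_univ, Fintype.card_fin]
    · intro w hw w' hw' hcc
      exact hpropv v w w' (Finset.mem_erase.1 hw).1 (Finset.mem_erase.1 hw').1 hcc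
  have hInj : Function.Injective incF := by
    intro u v huv
    by_contra hne
    obtain ⟨i, hi⟩ := hloc u v hne
    apply hi
    by_cases hmem : i ∈ incF u
    · obtain ⟨w, hw, hcw⟩ := (hmemInc u i).1 hmem
      obtain ⟨w', hw', hcw'⟩ := (hmemInc v i).1 (huv ▸ hmem)
      rw [EL.classDist_eq_zero_of c hw hcw, EL.classDist_eq_zero_of c hw' hcw']
    · have hu : ∀ w, w ≠ u → c s(u,w) ≠ i := fun w hw hcw => hmem ((hmemInc u i).2 ⟨w, hw, hcw⟩)
      have hv : ∀ w, w ≠ v → c s(v,w) ≠ i := fun w hw hcw => hmem (huv ▸ ((hmemInc v i).2 ⟨w, hw, hcw⟩))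
      exact EL.classDist_congr c hu hv
  have hk1 : n - 1 ≤ k := by
    have h0 := hcard ⟨0, by omega⟩
    calc n - 1 = (incF ⟨0, by omega⟩).card := h0.symm
      _ ≤ (Finset.univ : Finset (Fin k)).card := Finset.card_le_card (Finset.subset_univ _)
      _ = k := by simp
  have hkcase : k = n - 1 ∨ k = n := by omega
  rcases hkcase with hk | hk
  · -- k = n - 1 : all incidence sets are univ
    have huniv : ∀ v : Fin n, incF v = Finset.univ := by
      intro v
      apply Finset.eq_univ_of_card
      rw [hcard v, Fintype.card_fin, hk]
    have h01 : (⟨0, by omega⟩ : Fin n) = ⟨1, by omega⟩ :=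
      hInj ((huniv _).trans (huniv _).symm)
    simp [Fin.ext_iff] at h01
  · -- k = n : parity contradiction
    have hcompl : ∀ v : Fin n, ∃ a : Fin k, (incF v)ᶜ = {a} := by
      intro v
      apply Finset.card_eq_one.1
      rw [Finset.card_compl, hcard v, Fintype.card_fin, hk]
      omega
    choose m hm using hcompl
    have hmInj : Function.Injective m := by
      intro u v hmu
      apply hInj
      have h1 : (incF u)ᶜ = (incF v)ᶜ := by rw [hm u, hm v, hmu]
      exact compl_injective h1
    have hmSurj : Function.Surjective m :=
      ((Fintype.bijective_iff_injective_and_card m).2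
        ⟨hmInj, by simp [hk]⟩).2
    have v0 : Fin n := ⟨0, by omega⟩
    have hmissing : ∀ v : Fin n, (m v0 ∈ incF v ↔ v ≠ v0) := by
      intro v
      constructor
      · intro hmem hv
        have hic : m v0 ∈ (incF v)ᶜ := by
          rw [hm v, Finset.mem_singleton, hv]
        exact (Finset.mem_compl.1 hic) hmem
      · intro hv
        by_contra hmem
        have hic : m v0 ∈ (incF v)ᶜ := Finset.mem_compl.2 hmem
        rw [hm v, Finset.mem_singleton] at hic
        exact hv (hmInj hic.symm)
    -- the set of vertices incident to color i
    set T : Finset (Fin n) := Finset.univ.filter (fun v => m v0 ∈ incF v) with hT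
    have hcardT : T.card = n - 1 := by
      have hTeq : T = Finset.univ.erase v0 := by
        ext v
        simp only [hT, Finset.mem_filter, Finset.mem_univ, true_and, Finset.mem_erase,
          and_true]
        rw [hmissing v]
      rw [hTeq, Finset.card_erase_of_mem (Finset.mem_univ v0), Finset.card_univ,
        Fintype.card_fin]
    set E : Finset (Sym2 (Fin n)) :=
      Finset.univ.filter (fun e => (¬ e.IsDiag) ∧ c e = m v0) with hE
    have hTE : T = E.biUnion (fun e => Finset.univ.filter (· ∈ e)) := by
      ext v
      simp only [hT, hE, Finset.mem_filter, Finset.mem_biUnion, Finset.mem_univ, true_and]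
      constructor
      · intro hv
        obtain ⟨w, hw, hcw⟩ := (hmemInc v (m v0)).1 hv
        exact ⟨s(v,w), ⟨by simp [Sym2.mk_isDiag_iff, hw.symm], hcw⟩, by simp⟩
      · rintro ⟨e, ⟨hd, hce⟩, hve⟩
        obtain ⟨w, rfl⟩ := Sym2.mem_iff_exists.1 hve
        have hvw : v ≠ w := by simpa [Sym2.mk_isDiag_iff] using hd
        exact (hmemInc v (m v0)).2 ⟨w, hvw.symm, hce⟩
    have hdisj : ∀ e ∈ E, ∀ f ∈ E, e ≠ f →
        Disjoint (Finset.univ.filter (· ∈ e)) (Finset.univ.filter (· ∈ f)) := by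
      intro e he f hf hef
      rw [Finset.disjoint_left]
      intro x hxe hxf
      simp only [Finset.mem_filter, Finset.mem_univ, true_and] at hxe hxf
      simp only [hE, Finset.mem_filter, Finset.mem_univ, true_and] at he hf
      have heE : e ∈ (⊤ : SimpleGraph (Fin n)).edgeSet := by
        rw [SimpleGraph.edgeSet_top]; exact he.1
      have hfE : f ∈ (⊤ : SimpleGraph (Fin n)).edgeSet := by
        rw [SimpleGraph.edgeSet_top]; exact hf.1
      exact hprop e heE f hfE hef ⟨x, hxe, hxf⟩ (he.2.trans hf.2.symm)
    have hcard2 : ∀ e ∈ E, (Finset.univ.filter (· ∈ e)).card = 2 := by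
      intro e he
      simp only [hE, Finset.mem_filter, Finset.mem_univ, true_and] at he
      induction e with
      | _ x y =>
        have hxy : x ≠ y := by simpa [Sym2.mk_isDiag_iff] using he.1
        have hflt : Finset.univ.filter (· ∈ s(x,y)) = {x, y} := by
          ext z; simp [Sym2.mem_iff]
        rw [hflt, Finset.card_insert_of_notMem (by simpa using hxy), Finset.card_singleton]
    have hfin : T.card = 2 * E.card := by
      rw [hTE, Finset.card_biUnion hdisj]
      rw [Finset.sum_congr rfl hcard2, Finset.sum_const, smul_eq_mul, mul_comm]
    obtain ⟨t, ht⟩ := heven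
    omega

/-! ### Upper bound : the construction -/

def EL.lastV (n : ℕ) (hn : 4 ≤ n) : Fin n := ⟨n - 1, by omega⟩

def EL.phi (n : ℕ) (v : Fin n) : ZMod (n+1) := ((v.val + 2 : ℕ) : ZMod (n+1))

def EL.colFun (n : ℕ) (hn : 4 ≤ n) (u v : Fin n) : ZMod (n+1) :=
  if u = EL.lastV n hn then 2 * EL.phi n v
  else if v = EL.lastV n hn then 2 * EL.phi n u
  else EL.phi n u + EL.phi n v

lemma EL.colFun_symm (n : ℕ) (hn : 4 ≤ n) (u v : Fin n) :
    EL.colFun n hn u v = EL.colFun n hn v u := by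
  unfold EL.colFun
  by_cases hu : u = EL.lastV n hn <;> by_cases hv : v = EL.lastV n hn <;>
    simp [hu, hv, add_comm]

def EL.elC (n : ℕ) (hn : 4 ≤ n) : Sym2 (Fin n) → ZMod (n+1) :=
  Sym2.lift ⟨EL.colFun n hn, EL.colFun_symm n hn⟩

lemma EL.elC_mk (n : ℕ) (hn : 4 ≤ n) (u v : Fin n) :
    EL.elC n hn s(u,v) = EL.colFun n hn u v := rfl

lemma EL.cast_ne {n : ℕ} {a b : ℕ} (ha : a < n + 1) (hb : b < n + 1) (hab : a ≠ b) :
    (a : ZMod (n+1)) ≠ (b : ZMod (n+1)) := by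
  intro h
  have := congrArg ZMod.val h
  rw [ZMod.val_cast_of_lt ha, ZMod.val_cast_of_lt hb] at this
  exact hab this

lemma EL.hUnit {n : ℕ} (heven : Even n) : IsUnit (2 : ZMod (n+1)) := by
  have hodd : Odd (n + 1) := heven.add_one
  have h := (ZMod.isUnit_iff_coprime 2 (n+1)).2 (Nat.coprime_two_left.2 hodd)
  simpa using h

lemma EL.hval {n : ℕ} (hn : 4 ≤ n) {v : Fin n} (hv : v ≠ EL.lastV n hn) : (EL.phi n v).val = v.val + 2 := by
  apply ZMod.val_cast_of_lt
  have h1 : v.val < n := v.isLt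
  have h2 : v.val ≠ n - 1 := by
    intro h; apply hv; apply Fin.ext; simpa [EL.lastV] using h
  omega

lemma EL.phi_inj {n : ℕ} (hn : 4 ≤ n) {v w : Fin n} (hv : v ≠ EL.lastV n hn) (hw : w ≠ EL.lastV n hn)
    (h : EL.phi n v = EL.phi n w) : v = w := by
  have := congrArg ZMod.val h
  rw [EL.hval hn hv, EL.hval hn hw] at this
  exact Fin.ext (by omega)

lemma EL.phi_ne_zero {n : ℕ} (hn : 4 ≤ n) {v : Fin n} (hv : v ≠ EL.lastV n hn) : EL.phi n v ≠ 0 := by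
  intro h
  have := congrArg ZMod.val h
  rw [EL.hval hn hv, ZMod.val_zero] at this
  omega

lemma EL.phi_ne_one {n : ℕ} (hn : 4 ≤ n) {v : Fin n} (hv : v ≠ EL.lastV n hn) : EL.phi n v ≠ 1 := by
  haveI : Fact (1 < n + 1) := ⟨by omega⟩
  intro h
  have := congrArg ZMod.val h
  rw [EL.hval hn hv, ZMod.val_one] at this
  omega

lemma EL.phi_surj {n : ℕ} (hn : 4 ≤ n) {b : ZMod (n+1)} (hb0 : b ≠ 0) (hb1 : b ≠ 1) :
    ∃ v : Fin n, v ≠ EL.lastV n hn ∧ EL.phi n v = b := by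
  haveI : Fact (1 < n + 1) := ⟨by omega⟩
  have hblt : b.val < n + 1 := ZMod.val_lt b
  have hb : ((b.val : ℕ) : ZMod (n+1)) = b := ZMod.natCast_rightInverse b
  have h0 : b.val ≠ 0 := fun h => hb0 (by rw [← hb, h, Nat.cast_zero])
  have h1 : b.val ≠ 1 := fun h => hb1 (by rw [← hb, h, Nat.cast_one])
  refine ⟨⟨b.val - 2, by omega⟩, ?_, ?_⟩
  · intro h
    have := congrArg Fin.val h
    simp [EL.lastV] at this
    omega
  · show ((b.val - 2 + 2 : ℕ) : ZMod (n+1)) = b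
    rw [Nat.sub_add_cancel (by omega)]
    exact hb

lemma EL.key {n : ℕ} (hn : 4 ≤ n) (heven : Even n) (u v w : Fin n) (hvu : v ≠ u) (hwu : w ≠ u) (hvw : v ≠ w) :
    EL.colFun n hn u v ≠ EL.colFun n hn u w := by
  have hcancel : ∀ a b : ZMod (n+1), 2 * a = 2 * b → a = b := fun a b h =>
    (EL.hUnit heven).mul_left_cancel h
  unfold EL.colFun
  by_cases hu : u = EL.lastV n hn
  · rw [if_pos hu, if_pos hu]
    intro h
    exact hvw (EL.phi_inj hn (hu ▸ hvu) (hu ▸ hwu) (hcancel _ _ h))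
  · rw [if_neg hu, if_neg hu]
    by_cases hv : v = EL.lastV n hn
    · rw [if_pos hv]
      have hw : w ≠ EL.lastV n hn := fun h => hvw (hv.trans h.symm)
      rw [if_neg hw]
      intro h
      rw [two_mul] at h
      have := add_left_cancel h
      exact hwu (EL.phi_inj hn hw hu this.symm)
    · rw [if_neg hv]
      by_cases hw : w = EL.lastV n hn
      · rw [if_pos hw]
        intro h
        rw [two_mul] at h
        have := add_left_cancel h.symm
        exact hvu (EL.phi_inj hn hv hu this.symm)
      · rw [if_neg hw]
        intro h
        exact hvw (EL.phi_inj hn hv hw (add_left_cancel h))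

lemma EL.missLast {n : ℕ} (hn : 4 ≤ n) (heven : Even n) (w : Fin n) (hw : w ≠ EL.lastV n hn) :
    EL.colFun n hn (EL.lastV n hn) w ≠ 0 ∧ EL.colFun n hn (EL.lastV n hn) w ≠ 2 := by
  rw [EL.colFun, if_pos rfl]
  constructor
  · intro h
    apply EL.phi_ne_zero hn hw
    apply (EL.hUnit heven).mul_left_cancel
    rw [h, mul_zero]
  · intro h
    apply EL.phi_ne_one hn hw
    apply (EL.hUnit heven).mul_left_cancel
    rw [h, mul_one]

lemma EL.missOther {n : ℕ} (hn : 4 ≤ n) (u : Fin n) (hu : u ≠ EL.lastV n hn) (w : Fin n) (hw : w ≠ u) :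
    EL.colFun n hn u w ≠ EL.phi n u ∧ EL.colFun n hn u w ≠ EL.phi n u + 1 := by
  rw [EL.colFun, if_neg hu]
  by_cases hwl : w = EL.lastV n hn
  · rw [if_pos hwl]
    constructor
    · intro h
      rw [two_mul] at h
      have : EL.phi n u = 0 := by
        have := congrArg (fun x => x - EL.phi n u) h
        simpa using this
      exact EL.phi_ne_zero hn hu this
    · intro h
      rw [two_mul] at h
      exact EL.phi_ne_one hn hu (add_left_cancel h)
  · rw [if_neg hwl]
    constructor
    · intro h
      have : EL.phi n w = 0 := by
        have := congrArg (fun x => x - EL.phi n u) h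
        simpa using this
      exact EL.phi_ne_zero hn hwl this
    · intro h
      exact EL.phi_ne_one hn hwl (add_left_cancel h)

lemma EL.fillLast {n : ℕ} (hn : 4 ≤ n) (heven : Even n) (j : ZMod (n+1)) (hj0 : j ≠ 0) (hj2 : j ≠ 2) :
    ∃ w : Fin n, w ≠ EL.lastV n hn ∧ EL.colFun n hn (EL.lastV n hn) w = j := by
  obtain ⟨U, hU⟩ := EL.hUnit (n := n) heven
  set b : ZMod (n+1) := (↑U⁻¹ : ZMod (n+1)) * j with hbdef
  have h2b : 2 * b = j := by
    rw [hbdef, ← hU, Units.mul_inv_cancel_left]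
  have hb0 : b ≠ 0 := fun h => hj0 (by rw [← h2b, h, mul_zero])
  have hb1 : b ≠ 1 := fun h => hj2 (by rw [← h2b, h, mul_one])
  obtain ⟨w, hwl, hφ⟩ := EL.phi_surj hn hb0 hb1
  refine ⟨w, hwl, ?_⟩
  rw [EL.colFun, if_pos rfl, hφ, h2b]

lemma EL.fillOther {n : ℕ} (hn : 4 ≤ n) (u : Fin n) (hu : u ≠ EL.lastV n hn) (j : ZMod (n+1))
    (hj1 : j ≠ EL.phi n u) (hj2 : j ≠ EL.phi n u + 1) :
    ∃ w : Fin n, w ≠ u ∧ EL.colFun n hn u w = j := by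
  set b : ZMod (n+1) := j - EL.phi n u with hbdef
  have hjb : EL.phi n u + b = j := by rw [hbdef]; ring
  have hb0 : b ≠ 0 := fun h => hj1 (by rw [← hjb, h, add_zero])
  have hb1 : b ≠ 1 := fun h => hj2 (by rw [← hjb, h])
  by_cases hb : b = EL.phi n u
  · refine ⟨EL.lastV n hn, fun h => hu h.symm, ?_⟩
    rw [EL.colFun, if_neg hu, if_pos rfl]
    calc 2 * EL.phi n u = EL.phi n u + EL.phi n u := two_mul _
      _ = EL.phi n u + b := by rw [hb]
      _ = j := hjb
  · obtain ⟨w, hwl, hφ⟩ := EL.phi_surj hn hb0 hb1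
    have hwu : w ≠ u := fun h => hb (by rw [← hφ, h])
    refine ⟨w, hwu, ?_⟩
    rw [EL.colFun, if_neg hu, if_neg hwl, hφ, hjb]


lemma EL.numne {n : ℕ} (hn : 4 ≤ n) :
    ((1:ZMod (n+1)) ≠ 0) ∧ ((2:ZMod (n+1)) ≠ 0) ∧ ((2:ZMod (n+1)) ≠ 1) ∧
    ((3:ZMod (n+1)) ≠ 0) ∧ ((3:ZMod (n+1)) ≠ 2) := by
  refine ⟨?_, ?_, ?_, ?_, ?_⟩
  · have := EL.cast_ne (n := n) (a := 1) (b := 0) (by omega) (by omega) (by omega)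
    simpa using this
  · have := EL.cast_ne (n := n) (a := 2) (b := 0) (by omega) (by omega) (by omega)
    simpa using this
  · have := EL.cast_ne (n := n) (a := 2) (b := 1) (by omega) (by omega) (by omega)
    simpa using this
  · have := EL.cast_ne (n := n) (a := 3) (b := 0) (by omega) (by omega) (by omega)
    simpa using this
  · have := EL.cast_ne (n := n) (a := 3) (b := 2) (by omega) (by omega) (by omega)
    simpa using this

lemma EL.main_exists {n : ℕ} (hn : 4 ≤ n) (heven : Even n) (u v : Fin n) (huv : u ≠ v) :
    ∃ j : ZMod (n+1),
      (∃ w, w ≠ u ∧ EL.colFun n hn u w = j) ∧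
      (∀ w, w ≠ v → EL.colFun n hn v w ≠ j) := by
  obtain ⟨h10, h20, h21, h30, h32⟩ := EL.numne hn
  by_cases hv : v = EL.lastV n hn
  · subst hv
    have hu : u ≠ EL.lastV n hn := huv
    by_cases h0 : EL.phi n u + 1 = 0
    · refine ⟨2, ?_, fun w hw => (EL.missLast hn heven w hw).2⟩
      apply EL.fillOther hn u hu
      · intro h
        apply h30
        calc (3 : ZMod (n+1)) = 2 + 1 := by norm_num
          _ = EL.phi n u + 1 := by rw [h]
          _ = 0 := h0
      · rw [h0]; exact h20
    · refine ⟨0, ?_, fun w hw => (EL.missLast hn heven w hw).1⟩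
      apply EL.fillOther hn u hu
      · exact (EL.phi_ne_zero hn hu).symm
      · exact fun h => h0 h.symm
  · by_cases hu : u = EL.lastV n hn
    · subst hu
      by_cases h2 : EL.phi n v = 2
      · refine ⟨EL.phi n v + 1, ?_, fun w hw => (EL.missOther hn v hv w hw).2⟩
        apply EL.fillLast hn heven
        · rw [h2]; intro h; apply h30; rw [← h]; norm_num
        · rw [h2]; intro h; apply h32; rw [← h]; norm_num
      · refine ⟨EL.phi n v, ?_, fun w hw => (EL.missOther hn v hv w hw).1⟩
        exact EL.fillLast hn heven _ (EL.phi_ne_zero hn hv) h2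
    · have hφuv : EL.phi n v ≠ EL.phi n u := fun h => huv (EL.phi_inj hn hv hu h).symm
      by_cases hcase : EL.phi n v = EL.phi n u + 1
      · refine ⟨EL.phi n v + 1, ?_, fun w hw => (EL.missOther hn v hv w hw).2⟩
        apply EL.fillOther hn u hu
        · rw [hcase]
          intro h
          rw [add_assoc] at h
          have h1 : (1 : ZMod (n+1)) + 1 = 0 := by
            have := congrArg (fun x => x - EL.phi n u) h
            simpa using this
          apply h20
          rw [← h1]; norm_num
        · rw [hcase]
          intro h
          rw [add_assoc] at h
          have h1 : (1 : ZMod (n+1)) + 1 = 1 := add_left_cancel h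
          apply h10
          have := congrArg (fun x => x - 1) h1
          simpa using this
      · refine ⟨EL.phi n v, ?_, fun w hw => (EL.missOther hn v hv w hw).1⟩
        exact EL.fillOther hn u hu _ hφuv hcase

lemma EL.upper {n : ℕ} (hn : 4 ≤ n) (heven : Even n) :
    ∃ c : Sym2 (Fin n) → Fin (n+1), IsEdgeLocatingColoring (⊤ : SimpleGraph (Fin n)) c := by
  refine ⟨EL.elC n hn, ?_, ?_⟩
  · rintro e he f hf hef ⟨x, hxe, hxf⟩
    obtain ⟨v, rfl⟩ := Sym2.mem_iff_exists.1 hxe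
    obtain ⟨w, rfl⟩ := Sym2.mem_iff_exists.1 hxf
    rw [SimpleGraph.mem_edgeSet] at he hf
    have hv : v ≠ x := he.ne.symm
    have hw : w ≠ x := hf.ne.symm
    have hvw : v ≠ w := fun h => hef (by rw [h])
    exact EL.key hn heven x v w hv hw hvw
  · intro u v huv
    obtain ⟨j, ⟨w, hwu, hcw⟩, hmiss⟩ := EL.main_exists hn heven u v huv
    refine ⟨j, ?_⟩
    have h0 : classDist (⊤ : SimpleGraph (Fin n)) (EL.elC n hn) u j = 0 :=
      EL.classDist_eq_zero_of (EL.elC n hn) hwu hcw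
    have h1 : classDist (⊤ : SimpleGraph (Fin n)) (EL.elC n hn) v j ≠ 0 :=
      EL.classDist_ne_zero (EL.elC n hn) hmiss
    rw [h0]
    exact fun h => h1 h.symm


/-- For every even integer `n ≥ 4`, the edge-locating chromatic number of `K_n` is `n + 1`. -/
theorem stmt_7 (n : ℕ) (hn : 4 ≤ n) (heven : Even n) :
    edgeLocatingChromaticNumber (⊤ : SimpleGraph (Fin n)) = n + 1 := by
  have hmem : (n+1) ∈ {k | ∃ c : Sym2 (Fin n) → Fin k,
      IsEdgeLocatingColoring (⊤ : SimpleGraph (Fin n)) c} := EL.upper hn heven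
  unfold edgeLocatingChromaticNumber
  refine le_antisymm (Nat.sInf_le hmem) (le_csInf ⟨_, hmem⟩ ?_)
  rintro k ⟨c, hc⟩
  exact EL.lower hn heven c hc
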